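/- Let R be a commutative ring with 1, τ a symmetric relation on nonzero non-units, τ_reg = τ ∩ (Reg(R) × Reg(R)), and a a regular non-unit of R. Then the following are equivalent: (i) a is a τ_reg-atom (every τ_reg-factorization a = λ a₁⋯aₙ has a ∼ aᵢ for some i); (ii) a is a τ_reg-very strong atom (a ≅ a and every τ_reg-factorization has a ≅ aᵢ for some i); (iii) a admits only trivial τ_reg-factorizations. -/

import Mathlib

/-- A `τ`-factorization of `a`: `a = λ · a₁ ⋯ aₙ` with `λ` a unit, each `aᵢ` a
nonzero non-unit, and `aᵢ τ aⱼ` for all `i ≠ j` (via `Pairwise` and symmetry). -/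
def IsTauFactorization {R : Type*} [CommRing R] (τ : R → R → Prop)
    (a lam : R) (l : List R) : Prop :=
  IsUnit lam ∧ (∀ b ∈ l, b ≠ 0 ∧ ¬ IsUnit b) ∧ l.Pairwise τ ∧ a = lam * l.prod

/-- Very strong associates: `(a) = (b)` and either `a = b = 0` or every `r`
with `a = r * b` is a unit. -/
def VeryStrongAssociates {R : Type*} [CommRing R] (a b : R) : Prop :=
  Ideal.span {a} = Ideal.span ({b} : Set R) ∧
    ((a = 0 ∧ b = 0) ∨ ∀ r : R, a = r * b → IsUnit r)

/-- `τ_reg := τ ∩ (Reg(R) × Reg(R))`. -/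
def TauReg {R : Type*} [CommRing R] (τ : R → R → Prop) (x y : R) : Prop :=
  τ x y ∧ x ∈ nonZeroDivisors R ∧ y ∈ nonZeroDivisors R

private lemma reg_of_dvd {R : Type*} [CommRing R] {a b : R}
    (ha : a ∈ nonZeroDivisors R) (h : b ∣ a) : b ∈ nonZeroDivisors R := by
  obtain ⟨c, rfl⟩ := h
  exact mem_nonZeroDivisors_iff_right.mpr fun x hx => ha.2 x (by rw [← mul_assoc, hx, zero_mul])

/-- For a regular non-unit `a`, the notions of `τ_reg`-atom, `τ_reg`-very
strong atom, and `τ_reg`-unrefinable atom coincide. -/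
theorem stmt_13 {R : Type*} [CommRing R] (τ : R → R → Prop)
    (hsym : ∀ x y, τ x y → τ y x) (a : R)
    (ha : a ∈ nonZeroDivisors R) (hanu : ¬ IsUnit a) :
    ((∀ (lam : R) (l : List R), IsTauFactorization (TauReg τ) a lam l →
        ∃ b ∈ l, Ideal.span {a} = Ideal.span ({b} : Set R)) ↔
      ((∀ r : R, a = r * a → IsUnit r) ∧
        ∀ (lam : R) (l : List R), IsTauFactorization (TauReg τ) a lam l →
          ∃ b ∈ l, VeryStrongAssociates a b)) ∧
    (((∀ r : R, a = r * a → IsUnit r) ∧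
        ∀ (lam : R) (l : List R), IsTauFactorization (TauReg τ) a lam l →
          ∃ b ∈ l, VeryStrongAssociates a b) ↔
      (∀ (lam : R) (l : List R), IsTauFactorization (TauReg τ) a lam l →
        l.length = 1)) := by
  -- `a = r * a → IsUnit r` holds automatically since `a` is regular
  have hra : ∀ r : R, a = r * a → IsUnit r := by
    intro r hr
    have h0 : (r - 1) * a = 0 := by linear_combination -hr
    have h1 : r = 1 := sub_eq_zero.mp (ha.2 _ h0)
    exact h1 ▸ isUnit_one
  -- each factor in a factorization divides a and is regular
  have hfac : ∀ (lam : R) (l : List R), IsTauFactorization (TauReg τ) a lam l →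
      ∀ b ∈ l, b ∣ a ∧ b ∈ nonZeroDivisors R := by
    intro lam l ⟨hu, _, _, he⟩ b hb
    have hdvd : b ∣ a := by
      refine Dvd.dvd.trans (List.dvd_prod hb) ?_
      exact Dvd.intro_left lam he.symm
    exact ⟨hdvd, reg_of_dvd ha hdvd⟩
  -- (i) → (iii)
  have h13 : (∀ (lam : R) (l : List R), IsTauFactorization (TauReg τ) a lam l →
        ∃ b ∈ l, Ideal.span {a} = Ideal.span ({b} : Set R)) →
      (∀ (lam : R) (l : List R), IsTauFactorization (TauReg τ) a lam l →
        l.length = 1) := by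
    intro h1 lam l hf
    obtain ⟨b, hb, hspan⟩ := h1 lam l hf
    obtain ⟨_, hbreg⟩ := hfac lam l hf b hb
    obtain ⟨hu, hnu, _, he⟩ := hf
    -- from span equality, a = d * b with d a unit
    have hba : b ∣ a := Ideal.span_singleton_le_span_singleton.mp hspan.le
    have hab : a ∣ b := Ideal.span_singleton_le_span_singleton.mp hspan.ge
    obtain ⟨d, hd⟩ := hba
    obtain ⟨c, hc⟩ := hab
    have hdu : IsUnit d := by
      have : a = (d * c) * a := by
        calc a = b * d := hd
        _ = (a * c) * d := by rw [hc]
        _ = (d * c) * a := by ring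
      exact (isUnit_of_mul_isUnit_left (hra _ this))
    -- split the list at b
    obtain ⟨s, t, rfl⟩ := List.append_of_mem hb
    have hprod : (s ++ b :: t).prod = b * (s ++ t).prod := by
      simp [List.prod_append, List.prod_cons]
      try ring
    -- b * d = a = lam * b * prod(s++t), cancel b
    have hcancel : d = lam * (s ++ t).prod := by
      have h0 : (d - lam * (s ++ t).prod) * b = 0 := by
        have heq : b * d = lam * (b * (s ++ t).prod) := by
          rw [← hprod, ← he, hd]
        linear_combination heq
      exact sub_eq_zero.mp (hbreg.2 (d - lam * (s ++ t).prod) h0)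
    have hpu : IsUnit ((s ++ t).prod) := by
      apply isUnit_of_mul_isUnit_right (y := (s ++ t).prod)
      rw [← hcancel]; exact hdu
    -- so s ++ t has no elements (all elements are non-units)
    rcases List.eq_nil_or_concat (s ++ t) with hnil | ⟨_, x, hx⟩
    · have hs : s = [] := by
        rcases List.append_eq_nil_iff.mp hnil with ⟨h1, _⟩; exact h1
      have ht : t = [] := by
        rcases List.append_eq_nil_iff.mp hnil with ⟨_, h2⟩; exact h2
      simp [hs, ht]
    · exfalso
      have hxmem : x ∈ s ++ t := by rw [hx]; simp
      have hxmem' : x ∈ s ++ b :: t := by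
        rcases List.mem_append.mp hxmem with h | h
        · exact List.mem_append.mpr (Or.inl h)
        · exact List.mem_append.mpr (Or.inr (List.mem_cons_of_mem _ h))
      exact (hnu x hxmem').2 (isUnit_of_dvd_unit (List.dvd_prod hxmem) hpu)
  -- (iii) → (ii)
  have h32 : (∀ (lam : R) (l : List R), IsTauFactorization (TauReg τ) a lam l →
        l.length = 1) →
      ((∀ r : R, a = r * a → IsUnit r) ∧
        ∀ (lam : R) (l : List R), IsTauFactorization (TauReg τ) a lam l →
          ∃ b ∈ l, VeryStrongAssociates a b) := by
    intro h3
    refine ⟨hra, fun lam l hf => ?_⟩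
    have hlen := h3 lam l hf
    obtain ⟨b, hl⟩ : ∃ b, l = [b] := by
      match l, hlen with
      | [b], _ => exact ⟨b, rfl⟩
    subst hl
    obtain ⟨_, hbreg⟩ := hfac lam [b] hf b (by simp)
    obtain ⟨hu, hnu, _, he⟩ := hf
    simp only [List.prod_cons, List.prod_nil, mul_one] at he
    refine ⟨b, by simp, ?_, Or.inr fun r hr => ?_⟩
    · apply le_antisymm
      · exact Ideal.span_singleton_le_span_singleton.mpr ⟨lam, by rw [he]; ring⟩
      · obtain ⟨lu, hlu⟩ := hu
        refine Ideal.span_singleton_le_span_singleton.mpr ⟨(lu⁻¹ : Rˣ), ?_⟩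
        rw [he, ← hlu]
        rw [mul_comm, ← mul_assoc]
        simp [mul_comm]
    · -- a = r * b and a = lam * b with b regular ⇒ r = lam
      have h0 : (r - lam) * b = 0 := by
        have heq : r * b = lam * b := by rw [← hr, he]
        linear_combination heq
      have hrl : r = lam := sub_eq_zero.mp (hbreg.2 (r - lam) h0)
      exact hrl ▸ hu
  -- (ii) → (i)
  have h21 : ((∀ r : R, a = r * a → IsUnit r) ∧
        ∀ (lam : R) (l : List R), IsTauFactorization (TauReg τ) a lam l →
          ∃ b ∈ l, VeryStrongAssociates a b) →
      (∀ (lam : R) (l : List R), IsTauFactorization (TauReg τ) a lam l →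
        ∃ b ∈ l, Ideal.span {a} = Ideal.span ({b} : Set R)) := by
    intro ⟨_, h2⟩ lam l hf
    obtain ⟨b, hb, hvs⟩ := h2 lam l hf
    exact ⟨b, hb, hvs.1⟩
  exact ⟨⟨fun h1 => h32 (h13 h1), h21⟩, ⟨fun h2 => h13 (h21 h2), h32⟩⟩
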